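/- Let n ≥ 1 and let L be a collection of pairwise disjoint nonempty subsets of ℝⁿ containing at least two distinct members, such that R = ℝⁿ \ ⋃L is meagre and Lebesgue null. Then the following are equivalent: (1) for every x ∈ ⋃L, the coverage at x of the member of L containing x is infinite (for every r > 0 there is an open ball of radius greater than r containing x and contained in that member); (2) there exist a nonzero vector u ∈ ℝⁿ and a real c such that L = { {y : ⟪u, y⟫ > c}, {y : ⟪u, y⟫ < c} } and R = {y : ⟪u, y⟫ = c}. (A non-trivial classifier has infinite pointwise coverage just in case it is a refined linear classifier.) -/

import Mathlib

open Metric RealInnerProductSpace MeasureTheory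

open Filter Topology

lemma halfspace_of_coverage {n : ℕ} {A : Set (EuclideanSpace ℝ (Fin n))}
    {a b₀ : EuclideanSpace ℝ (Fin n)} (ha : a ∈ A) (hb : b₀ ∉ A)
    (hcov : ∀ r : ℝ, 0 < r → ∃ q s, r < s ∧ a ∈ ball q s ∧ ball q s ⊆ A) :
    ∃ e : EuclideanSpace ℝ (Fin n), ‖e‖ = 1 ∧ ∀ y, ⟪e, a⟫ < ⟪e, y⟫ → y ∈ A := by
  have hcov' : ∀ k : ℕ, ∃ q, ∃ s : ℝ, (k : ℝ) + dist a b₀ + 1 < s ∧ a ∈ ball q s ∧ ball q s ⊆ A := by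
    intro k
    exact hcov _ (by positivity)
  choose q s hs hmem hsub using hcov'
  have hms : ∀ k : ℕ, dist a (q k) < s k := fun k => mem_ball.mp (hmem k)
  have hmlb : ∀ k : ℕ, (k : ℝ) + 1 < dist a (q k) := by
    intro k
    have hb' : b₀ ∉ ball (q k) (s k) := fun h => hb (hsub k h)
    have h1 : s k ≤ dist b₀ (q k) := not_lt.mp (fun h => hb' (mem_ball.mpr h))
    have h2 : dist b₀ (q k) ≤ dist b₀ a + dist a (q k) := dist_triangle _ _ _
    have h3 := hs k
    have hd : dist b₀ a = dist a b₀ := dist_comm _ _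
    linarith
  have hmpos : ∀ k : ℕ, (0:ℝ) < dist a (q k) := fun k => lt_trans (by positivity) (hmlb k)
  have hnq : ∀ k : ℕ, ‖q k - a‖ = dist a (q k) := by
    intro k; rw [dist_eq_norm, norm_sub_rev]
  set e : ℕ → EuclideanSpace ℝ (Fin n) := fun k => (dist a (q k))⁻¹ • (q k - a) with he
  have hnorm : ∀ k, ‖e k‖ = 1 := by
    intro k
    rw [he]
    simp only [norm_smul, hnq k, Real.norm_eq_abs, abs_of_pos (inv_pos.mpr (hmpos k))]
    exact inv_mul_cancel₀ (hmpos k).ne'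
  have hmem' : ∀ k, e k ∈ sphere (0 : EuclideanSpace ℝ (Fin n)) 1 := by
    intro k; simpa [mem_sphere_iff_norm] using hnorm k
  obtain ⟨E, hE, φ, hφ, hlim⟩ :=
    (isCompact_sphere (0 : EuclideanSpace ℝ (Fin n)) 1).tendsto_subseq hmem'
  have hEnorm : ‖E‖ = 1 := by simpa [mem_sphere_iff_norm] using hE
  refine ⟨E, hEnorm, ?_⟩
  intro y hy
  set ε : ℝ := ⟪E, y - a⟫ with hε
  have hεpos : 0 < ε := by rw [hε, inner_sub_right]; linarith
  have htend : Tendsto (fun j => ⟪e (φ j), y - a⟫) atTop (𝓝 ε) :=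
    (hlim.inner tendsto_const_nhds)
  obtain ⟨N, hN⟩ := exists_nat_gt (2 * ‖y - a‖^2 / ε)
  obtain ⟨j, hj1, hj2⟩ := ((htend.eventually (lt_mem_nhds (by linarith : ε/2 < ε))).and
    (eventually_ge_atTop N)).exists
  set k := φ j with hk
  have hjk : (j : ℝ) ≤ (k : ℝ) := by exact_mod_cast hφ.le_apply
  have hNj : (N : ℝ) ≤ (j : ℝ) := by exact_mod_cast hj2
  have hmk : 2 * ‖y - a‖^2 / ε < dist a (q k) := by linarith [hmlb k]
  have hmk2 : 2 * ‖y - a‖^2 < ε * dist a (q k) := by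
    rw [div_lt_iff₀ hεpos] at hmk; linarith
  have hqa : q k - a = dist a (q k) • e k := by
    rw [he]; simp only []
    rw [smul_smul, mul_inv_cancel₀ (hmpos k).ne', one_smul]
  have hin : ⟪y - a, q k - a⟫ = dist a (q k) * ⟪e k, y - a⟫ := by
    rw [hqa, real_inner_smul_right, real_inner_comm]
  have hdist : ‖y - q k‖^2 = ‖y - a‖^2 - 2 * (dist a (q k) * ⟪e k, y - a⟫) + (dist a (q k))^2 := by
    have h0 : y - q k = (y - a) - (q k - a) := by abel
    rw [h0, norm_sub_sq_real, hin, hnq]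
  have hlt : ‖y - q k‖^2 < (s k)^2 := by
    have h1 : ε/2 < ⟪e k, y - a⟫ := hj1
    have h2 : dist a (q k) < s k := hms k
    have h3 : 0 < dist a (q k) := hmpos k
    nlinarith [norm_nonneg (y - a)]
  have hfin : dist y (q k) < s k := by
    have hs0 : (0:ℝ) ≤ s k := le_of_lt (lt_trans (by positivity) (hs k))
    rw [dist_eq_norm]
    exact lt_of_pow_lt_pow_left₀ 2 hs0 hlt
  exact hsub k (mem_ball.mpr hfin)


lemma neg_of_disjoint_halfspaces {n : ℕ} {e f : EuclideanSpace ℝ (Fin n)}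
    (he : ‖e‖ = 1) (hf : ‖f‖ = 1) {α β : ℝ}
    (h : ∀ y : EuclideanSpace ℝ (Fin n), α < ⟪e, y⟫ → β < ⟪f, y⟫ → False) : f = -e := by
  by_contra hne
  have hef : e + f ≠ 0 := by
    intro h0
    exact hne (by rw [eq_neg_iff_add_eq_zero, add_comm]; exact h0)
  have hd : (0:ℝ) < 1 + ⟪e, f⟫ := by
    have h1 : ‖e + f‖^2 = 2 + 2 * ⟪e, f⟫ := by
      rw [norm_add_sq_real, he, hf]; ring
    have h2 : (0:ℝ) < ‖e + f‖ := norm_pos_iff.mpr hef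
    nlinarith
  set t : ℝ := (max α β + 1) / (1 + ⟪e, f⟫) with ht
  have h1 : ⟪e, t • (e + f)⟫ = max α β + 1 := by
    have : ⟪e, t • (e + f)⟫ = t * (1 + ⟪e, f⟫) := by
      rw [real_inner_smul_right, inner_add_right, real_inner_self_eq_norm_sq, he]; ring
    rw [this, ht, div_mul_cancel₀ _ hd.ne']
  have h2 : ⟪f, t • (e + f)⟫ = max α β + 1 := by
    have : ⟪f, t • (e + f)⟫ = t * (1 + ⟪e, f⟫) := by
      rw [real_inner_smul_right, inner_add_right, real_inner_self_eq_norm_sq, hf,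
        real_inner_comm f e]; ring
    rw [this, ht, div_mul_cancel₀ _ hd.ne']
  exact h (t • (e + f)) (by rw [h1]; have := le_max_left α β; linarith)
    (by rw [h2]; have := le_max_right α β; linarith)

lemma anchor_halfspace {n : ℕ} (u : EuclideanSpace ℝ (Fin n)) (hu : u ≠ 0) (c : ℝ)
    {x : EuclideanSpace ℝ (Fin n)} (hx : c < ⟪u, x⟫) {r : ℝ} (hr : 0 < r) :
    ∃ (q : EuclideanSpace ℝ (Fin n)) (s : ℝ), r < s ∧ x ∈ ball q s ∧
      ball q s ⊆ {y : EuclideanSpace ℝ (Fin n) | c < ⟪u, y⟫} := by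
  have hnu : (0:ℝ) < ‖u‖ := norm_pos_iff.mpr hu
  set d : ℝ := ⟪u, x⟫ - c with hd
  have hdpos : 0 < d := by rw [hd]; linarith
  set t : ℝ := (r + 1) / ‖u‖ with ht
  have htpos : 0 < t := by positivity
  have hd2 : 0 < d / (2 * ‖u‖) := div_pos hdpos (by positivity)
  refine ⟨x + t • u, (r + 1) + d / (2 * ‖u‖), by linarith, ?_, ?_⟩
  · rw [mem_ball, dist_eq_norm]
    have : x - (x + t • u) = -(t • u) := by abel
    rw [this, norm_neg, norm_smul, Real.norm_eq_abs, abs_of_pos htpos, ht]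
    rw [div_mul_cancel₀ _ hnu.ne']
    linarith
  · intro y hy
    rw [mem_ball, dist_eq_norm] at hy
    have hiq : ⟪u, x + t • u⟫ = ⟪u, x⟫ + t * ‖u‖^2 := by
      rw [inner_add_right, real_inner_smul_right, real_inner_self_eq_norm_sq]
    have hbound : |⟪u, y - (x + t • u)⟫| ≤ ‖u‖ * ‖y - (x + t • u)‖ := abs_real_inner_le_norm _ _
    have hsplit : ⟪u, y⟫ = ⟪u, x + t • u⟫ + ⟪u, y - (x + t • u)⟫ := by
      rw [inner_sub_right]; ring
    have hkey : ‖u‖ * ‖y - (x + t • u)‖ < ‖u‖ * ((r + 1) + d / (2 * ‖u‖)) :=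
      mul_lt_mul_of_pos_left hy hnu
    have ht2 : t * ‖u‖^2 = (r + 1) * ‖u‖ := by
      rw [ht]; field_simp
    have habs : -(‖u‖ * ‖y - (x + t • u)‖) ≤ ⟪u, y - (x + t • u)⟫ := neg_le_of_abs_le hbound
    have hexp : ‖u‖ * ((r + 1) + d / (2 * ‖u‖)) = (r + 1) * ‖u‖ + d / 2 := by
      field_simp
    show c < ⟪u, y⟫
    rw [hsplit, hiq]
    nlinarith


theorem main_fwd
    (n : ℕ) (L : Set (Set (EuclideanSpace ℝ (Fin n))))
    (hdisj : L.Pairwise Disjoint)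
    (hne : ∀ A ∈ L, A.Nonempty)
    (htwo : ∃ A ∈ L, ∃ B ∈ L, A ≠ B)
    (hnull : volume (Set.univ \ ⋃₀ L) = 0)
    (hcov : ∀ A ∈ L, ∀ x ∈ A, ∀ r : ℝ, 0 < r →
      ∃ (q : EuclideanSpace ℝ (Fin n)) (s : ℝ), r < s ∧ x ∈ ball q s ∧ ball q s ⊆ A) :
    (∃ (u : EuclideanSpace ℝ (Fin n)) (c : ℝ), u ≠ 0 ∧
      L = {{y : EuclideanSpace ℝ (Fin n) | ⟪u, y⟫ > c},
           {y : EuclideanSpace ℝ (Fin n) | ⟪u, y⟫ < c}} ∧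
      Set.univ \ ⋃₀ L = {y : EuclideanSpace ℝ (Fin n) | ⟪u, y⟫ = c}) := by
  obtain ⟨A, hA, B, hB, hAB⟩ := htwo
  have hdisAB : Disjoint A B := hdisj hA hB hAB
  obtain ⟨a₀, ha₀⟩ := hne A hA
  obtain ⟨b₀, hb₀⟩ := hne B hB
  have hb₀A : b₀ ∉ A := fun h => Set.disjoint_left.mp hdisAB h hb₀
  have ha₀B : a₀ ∉ B := fun h => Set.disjoint_right.mp hdisAB h ha₀
  obtain ⟨e, heN, heH⟩ := halfspace_of_coverage ha₀ hb₀A (hcov A hA a₀ ha₀)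
  obtain ⟨f, hfN, hfH⟩ := halfspace_of_coverage hb₀ ha₀B (hcov B hB b₀ hb₀)
  have hfe : f = -e := neg_of_disjoint_halfspaces heN hfN (fun y h1 h2 =>
    Set.disjoint_left.mp hdisAB (heH y h1) (hfH y h2))
  -- every point of A has halfspace with normal e
  have hAhalf : ∀ a ∈ A, ∀ y, ⟪e, a⟫ < ⟪e, y⟫ → y ∈ A := by
    intro a ha y hy
    obtain ⟨g, hgN, hgH⟩ := halfspace_of_coverage ha hb₀A (hcov A hA a ha)
    have hgf : g = -f := neg_of_disjoint_halfspaces hfN hgN (fun y h1 h2 =>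
      Set.disjoint_left.mp hdisAB (hgH y h2) (hfH y h1))
    have hge : g = e := by rw [hgf, hfe, neg_neg]
    exact hgH y (by rw [hge]; exact hy)
  have hBhalf : ∀ b ∈ B, ∀ y, ⟪e, y⟫ < ⟪e, b⟫ → y ∈ B := by
    intro b hb y hy
    obtain ⟨g, hgN, hgH⟩ := halfspace_of_coverage hb ha₀B (hcov B hB b hb)
    have hge : g = -e := neg_of_disjoint_halfspaces heN hgN (fun y h1 h2 =>
      Set.disjoint_left.mp hdisAB (heH y h1) (hgH y h2))
    apply hgH y
    rw [hge, inner_neg_left, inner_neg_left]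
    exact neg_lt_neg hy
  have hcross : ∀ a ∈ A, ∀ b ∈ B, ⟪e, b⟫ ≤ ⟪e, a⟫ := by
    intro a ha b hb
    by_contra h
    push_neg at h
    exact Set.disjoint_left.mp hdisAB (hAhalf a ha b h) hb
  -- no third label
  have honly : ∀ C ∈ L, C = A ∨ C = B := by
    intro C hC
    by_contra hne'
    push_neg at hne'
    obtain ⟨hCA, hCB⟩ := hne'
    obtain ⟨c, hc⟩ := hne C hC
    have hdCA : Disjoint C A := hdisj hC hA hCA
    have hdCB : Disjoint C B := hdisj hC hB hCB
    have ha₀C : a₀ ∉ C := fun h => Set.disjoint_left.mp hdCA h ha₀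
    obtain ⟨g, hgN, hgH⟩ := halfspace_of_coverage hc ha₀C (hcov C hC c hc)
    have h1 : g = -e := neg_of_disjoint_halfspaces heN hgN (fun y p1 p2 =>
      Set.disjoint_right.mp hdCA (heH y p1) (hgH y p2))
    have h2 : g = -f := neg_of_disjoint_halfspaces hfN hgN (fun y p1 p2 =>
      Set.disjoint_right.mp hdCB (hfH y p1) (hgH y p2))
    rw [hfe, neg_neg] at h2
    rw [h2] at h1
    have h0 : e = 0 := by
      have h3 : e + e = 0 := by nth_rewrite 2 [h1]; exact add_neg_cancel e
      have h4 : (2:ℝ) • e = 0 := by rw [two_smul]; exact h3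
      rcases smul_eq_zero.mp h4 with h | h
      · norm_num at h
      · exact h
    rw [h0] at heN
    simp at heN
  set SA := (fun y => ⟪e, y⟫) '' A with hSA
  set SB := (fun y => ⟪e, y⟫) '' B with hSB
  have hSAne : SA.Nonempty := ⟨_, ⟨a₀, ha₀, rfl⟩⟩
  have hSBne : SB.Nonempty := ⟨_, ⟨b₀, hb₀, rfl⟩⟩
  have hSAbdd : BddBelow SA := by
    refine ⟨⟪e, b₀⟫, ?_⟩
    rintro x ⟨a, ha, rfl⟩
    exact hcross a ha b₀ hb₀
  have hSBbdd : BddAbove SB := by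
    refine ⟨⟪e, a₀⟫, ?_⟩
    rintro x ⟨b, hb, rfl⟩
    exact hcross a₀ ha₀ b hb
  set α := sInf SA with hα
  set β := sSup SB with hβ
  have hβα : β ≤ α := by
    apply csSup_le hSBne
    rintro z ⟨b, hb, rfl⟩
    apply le_csInf hSAne
    rintro x ⟨a, ha, rfl⟩
    exact hcross a ha b hb
  have hαβ : α ≤ β := by
    by_contra hlt
    push_neg at hlt
    set z := ((α + β)/2) • e with hzdef
    have hz : ⟪e, z⟫ = (α + β)/2 := by
      rw [hzdef, real_inner_smul_right, real_inner_self_eq_norm_sq, heN]; ring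
    have hball : ball z ((α - β)/2) ⊆ Set.univ \ ⋃₀ L := by
      intro y hyb
      have hyd : |⟪e, y⟫ - (α + β)/2| < (α - β)/2 := by
        rw [← hz, ← inner_sub_right]
        calc |⟪e, y - z⟫| ≤ ‖e‖ * ‖y - z‖ := abs_real_inner_le_norm _ _
          _ = ‖y - z‖ := by rw [heN, one_mul]
          _ < (α - β)/2 := by rw [← dist_eq_norm]; exact mem_ball.mp hyb
      obtain ⟨hy1, hy2⟩ := abs_lt.mp hyd
      refine ⟨trivial, fun hy' => ?_⟩
      obtain ⟨C, hC, hyC⟩ := hy'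
      rcases honly C hC with rfl | rfl
      · have : α ≤ ⟪e, y⟫ := csInf_le hSAbdd ⟨y, hyC, rfl⟩
        linarith
      · have : ⟪e, y⟫ ≤ β := le_csSup hSBbdd ⟨y, hyC, rfl⟩
        linarith
    have hpos : 0 < volume (ball z ((α - β)/2)) := measure_ball_pos volume z (by linarith)
    have hle := measure_mono (μ := (volume : Measure (EuclideanSpace ℝ (Fin n)))) hball
    rw [hnull] at hle
    exact hpos.ne' (le_antisymm hle zero_le)
  have hαeqβ : α = β := le_antisymm hαβ hβα
  -- A strictly above α
  have hAsub : ∀ a ∈ A, α < ⟪e, a⟫ := by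
    intro a ha
    obtain ⟨q, s, hs, hmem, hsub⟩ := hcov A hA a ha 1 one_pos
    set δ := (s - dist a q)/2 with hδdef
    have hδ : 0 < δ := by
      have := mem_ball.mp hmem
      rw [hδdef]; linarith
    have ha' : a - δ • e ∈ A := by
      apply hsub
      rw [mem_ball]
      have hd1 : dist (a - δ • e) a = δ := by
        rw [dist_eq_norm]
        have : a - δ • e - a = -(δ • e) := by abel
        rw [this, norm_neg, norm_smul, heN, Real.norm_eq_abs, abs_of_pos hδ, mul_one]
      calc dist (a - δ • e) q ≤ dist (a - δ • e) a + dist a q := dist_triangle _ _ _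
        _ < s := by rw [hd1]; rw [hδdef]; linarith [mem_ball.mp hmem]
    have h1 : α ≤ ⟪e, a - δ • e⟫ := csInf_le hSAbdd ⟨_, ha', rfl⟩
    have h2 : ⟪e, a - δ • e⟫ = ⟪e, a⟫ - δ := by
      rw [inner_sub_right, real_inner_smul_right, real_inner_self_eq_norm_sq, heN]; ring
    linarith
  have hBsub : ∀ b ∈ B, ⟪e, b⟫ < β := by
    intro b hb
    obtain ⟨q, s, hs, hmem, hsub⟩ := hcov B hB b hb 1 one_pos
    set δ := (s - dist b q)/2 with hδdef
    have hδ : 0 < δ := by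
      have := mem_ball.mp hmem
      rw [hδdef]; linarith
    have hb' : b + δ • e ∈ B := by
      apply hsub
      rw [mem_ball]
      have hd1 : dist (b + δ • e) b = δ := by
        rw [dist_eq_norm]
        have : b + δ • e - b = δ • e := by abel
        rw [this, norm_smul, heN, Real.norm_eq_abs, abs_of_pos hδ, mul_one]
      calc dist (b + δ • e) q ≤ dist (b + δ • e) b + dist b q := dist_triangle _ _ _
        _ < s := by rw [hd1]; rw [hδdef]; linarith [mem_ball.mp hmem]
    have h1 : ⟪e, b + δ • e⟫ ≤ β := le_csSup hSBbdd ⟨_, hb', rfl⟩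
    have h2 : ⟪e, b + δ • e⟫ = ⟪e, b⟫ + δ := by
      rw [inner_add_right, real_inner_smul_right, real_inner_self_eq_norm_sq, heN]; ring
    linarith
  have hAeq : A = {y : EuclideanSpace ℝ (Fin n) | ⟪e, y⟫ > α} := by
    ext y
    constructor
    · intro hy
      exact hAsub y hy
    · intro hy
      obtain ⟨x, ⟨a, ha, rfl⟩, hx⟩ := exists_lt_of_csInf_lt hSAne hy
      exact hAhalf a ha y hx
  have hBeq : B = {y : EuclideanSpace ℝ (Fin n) | ⟪e, y⟫ < α} := by
    ext y
    constructor
    · intro hy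
      have := hBsub y hy
      simpa [hαeqβ] using this
    · intro hy
      rw [hαeqβ] at hy
      obtain ⟨x, ⟨b, hb, rfl⟩, hx⟩ := exists_lt_of_lt_csSup hSBne hy
      exact hBhalf b hb y hx
  have hLeq : L = {{y : EuclideanSpace ℝ (Fin n) | ⟪e, y⟫ > α},
      {y : EuclideanSpace ℝ (Fin n) | ⟪e, y⟫ < α}} := by
    ext C
    simp only [Set.mem_insert_iff, Set.mem_singleton_iff]
    constructor
    · intro hC
      rcases honly C hC with rfl | rfl
      · left; exact hAeq
      · right; exact hBeq
    · rintro (rfl | rfl)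
      · rwa [← hAeq]
      · rwa [← hBeq]
  refine ⟨e, α, fun h0 => by rw [h0] at heN; simp at heN, hLeq, ?_⟩
  rw [hLeq]
  ext y
  simp only [Set.sUnion_insert, Set.sUnion_singleton, Set.mem_diff, Set.mem_univ, true_and,
    Set.mem_union, Set.mem_setOf_eq, not_or, not_lt, gt_iff_lt]
  constructor
  · rintro ⟨h1, h2⟩
    linarith
  · intro h
    constructor <;> linarith




/-- A non-trivial classifier has infinite pointwise coverage just in case it is a
refined linear classifier: for a collection `L` of pairwise disjoint nonempty subsets of
`ℝⁿ` with at least two members whose complement `R = ℝⁿ \ ⋃L` is meagre and Lebesgue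
null, every point of every label has anchors of arbitrarily large radius iff `L`
consists of the two open halfspaces determined by some hyperplane and `R` is that
hyperplane. -/
theorem infinite_pointwise_coverage_iff_refined_linear
    (n : ℕ) (hn : 1 ≤ n) (L : Set (Set (EuclideanSpace ℝ (Fin n))))
    (hdisj : L.Pairwise Disjoint)
    (hne : ∀ A ∈ L, A.Nonempty)
    (htwo : ∃ A ∈ L, ∃ B ∈ L, A ≠ B)
    (hmeagre : IsMeagre (Set.univ \ ⋃₀ L))
    (hnull : volume (Set.univ \ ⋃₀ L) = 0) :
    (∀ A ∈ L, ∀ x ∈ A, ∀ r : ℝ, 0 < r →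
      ∃ (q : EuclideanSpace ℝ (Fin n)) (s : ℝ), r < s ∧ x ∈ ball q s ∧ ball q s ⊆ A) ↔
    (∃ (u : EuclideanSpace ℝ (Fin n)) (c : ℝ), u ≠ 0 ∧
      L = {{y : EuclideanSpace ℝ (Fin n) | ⟪u, y⟫ > c},
           {y : EuclideanSpace ℝ (Fin n) | ⟪u, y⟫ < c}} ∧
      Set.univ \ ⋃₀ L = {y : EuclideanSpace ℝ (Fin n) | ⟪u, y⟫ = c}) := by
  constructor
  · intro hcov
    exact main_fwd n L hdisj hne htwo hnull hcov
  · rintro ⟨u, c, hu, hL, hR⟩ A hA x hx r hr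
    rw [hL] at hA
    simp only [Set.mem_insert_iff, Set.mem_singleton_iff] at hA
    rcases hA with rfl | rfl
    · exact anchor_halfspace u hu c hx hr
    · have hx' : -c < ⟪-u, x⟫ := by
        rw [inner_neg_left]
        exact neg_lt_neg hx
      obtain ⟨q, s, hs, hmem, hsub⟩ := anchor_halfspace (-u) (neg_ne_zero.mpr hu) (-c) hx' hr
      refine ⟨q, s, hs, hmem, fun y hy => ?_⟩
      have h2 := hsub hy
      simp only [Set.mem_setOf_eq, inner_neg_left, neg_lt_neg_iff] at h2 ⊢
      exact h2
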